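/- Cayley–Dickson doubling as cochain: let G be a finite abelian group, F a 2-cochain on G, s: G → k* with s(e) = 1, and α ∈ k*. Define Ḡ = G × Z₂ and a cochain F̄ on Ḡ by F̄(x,y) = F(x,y), F̄(x,vy) = s(x)F(x,y), F̄(vx,y) = F(y,x), F̄(vx,vy) = α s(x)F(y,x), where x denotes (x,0) and vx denotes (x,1). Then F̄ is a 2-cochain on Ḡ (pointwise invertible with F̄(e,g) = F̄(g,e) = 1), and if σ(x) = s(x)x is a strong involution of k_F G, the algebra k_{F̄} Ḡ coincides with the Cayley–Dickson extension of k_F G with parameter α: (a + vb)·(c + vd) = (a·c + α d·σ(b)) + v(σ(a)·d + c·b). -/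

import Mathlib

abbrev Z2 := Multiplicative (ZMod 2)

/-- The nontrivial element `ν` of `Z₂`, so `vx = (x, ν)`. -/
def vv : Z2 := Multiplicative.ofAdd 1

def delta {G : Type*} [DecidableEq G] {k : Type*} [Zero k] [One k] (x : G) : G → k :=
  fun y => if y = x then 1 else 0

/-- The twisted product on the group algebra `kG`. -/
def tmul {G : Type*} [Group G] [Fintype G] {k : Type*} [Field k]
    (F : G → G → k) (a b : G → k) : G → k :=
  fun z => ∑ x : G, F x (x⁻¹ * z) * a x * b (x⁻¹ * z)

/-- The diagonal linear map `σ(x) = s(x) x` extended linearly. -/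
def sigmaMap {G : Type*} {k : Type*} [Mul k] (s : G → k) (a : G → k) : G → k :=
  fun x => s x * a x

/-- `σ` is a strong involution of `k_F G`. -/
def IsStrongInvolution {G : Type*} [Group G] [Fintype G] [DecidableEq G] {k : Type*} [Field k]
    (F : G → G → k) (s : G → k) : Prop :=
  (∀ a : G → k, sigmaMap s (sigmaMap s a) = a) ∧
  sigmaMap s (delta 1) = (delta 1 : G → k) ∧
  (∀ a b : G → k, sigmaMap s (tmul F a b) = tmul F (sigmaMap s b) (sigmaMap s a)) ∧
  (∀ a : G → k, ∃ c : k, a + sigmaMap s a = c • (delta 1 : G → k)) ∧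
  (∀ a : G → k, ∃ c : k, tmul F a (sigmaMap s a) = c • (delta 1 : G → k))

/-- The Cayley–Dickson doubled cochain `F̄` on `Ḡ = G × Z₂`:
`F̄(x,y) = F(x,y)`, `F̄(x,vy) = s(x)F(x,y)`, `F̄(vx,y) = F(y,x)`, `F̄(vx,vy) = α s(x) F(y,x)`. -/
def Fbar {G : Type*} {k : Type*} [Mul k] (F : G → G → k) (s : G → k) (α : k) :
    G × Z2 → G × Z2 → k :=
  fun p q =>
    if p.2 = 1 then (if q.2 = 1 then F p.1 q.1 else s p.1 * F p.1 q.1)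
    else (if q.2 = 1 then F q.1 p.1 else α * (s p.1 * F q.1 p.1))

/-- Inclusion of `A` as the first summand of `Ā = A ⊕ vA`. -/
def iota0 {G : Type*} {k : Type*} [Zero k] (a : G → k) : G × Z2 → k :=
  fun p => if p.2 = 1 then a p.1 else 0

/-- Inclusion of `A` as the second summand `vA` of `Ā = A ⊕ vA`. -/
def iota1 {G : Type*} {k : Type*} [Zero k] (b : G → k) : G × Z2 → k :=
  fun p => if p.2 = 1 then 0 else b p.1

/-- `F̄` is a 2-cochain on `Ḡ = G × Z₂`, and if `σ(x) = s(x)x` is a strong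
involution then `k_{F̄}Ḡ` is the Cayley–Dickson extension of `k_F G` with parameter `α`:
`(a + vb)(c + vd) = (a·c + α d·σ(b)) + v(σ(a)·d + c·b)`. -/

lemma z2_sum' {M : Type*} [AddCommMonoid M] (f : Z2 → M) :
    ∑ ε : Z2, f ε = f 1 + f vv := by
  have h : (Finset.univ : Finset Z2) = {1, vv} := by decide
  rw [h, Finset.sum_insert (by decide), Finset.sum_singleton]

lemma z2_cases' (ε : Z2) : ε = 1 ∨ ε = vv := by revert ε; decide

lemma vv_ne_one : (vv : Z2) ≠ 1 := by decide
lemma vv_inv : (vv : Z2)⁻¹ = vv := by decide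
lemma vv_mul_vv : (vv : Z2) * vv = 1 := by decide

lemma inv_mul_inv_mul {G : Type*} [CommGroup G] (x z : G) : (x⁻¹ * z)⁻¹ * z = x := by
  rw [mul_inv_rev, inv_inv, mul_comm _ x, inv_mul_cancel_right]

theorem stmt12 {G : Type*} [CommGroup G] [Fintype G] [DecidableEq G] {k : Type*} [Field k]
    (F : G → G → k) (hne : ∀ x y, F x y ≠ 0)
    (hr : ∀ x, F x 1 = 1) (hl : ∀ x, F 1 x = 1)
    (s : G → k) (hs : ∀ x, s x ≠ 0) (hse : s 1 = 1)
    (α : k) (hα : α ≠ 0) :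
    ((∀ g : G × Z2, Fbar F s α g 1 = 1 ∧ Fbar F s α 1 g = 1) ∧
     (∀ g h : G × Z2, Fbar F s α g h ≠ 0)) ∧
    (IsStrongInvolution F s →
      ∀ a b c d : G → k,
        tmul (Fbar F s α) (iota0 a + iota1 b) (iota0 c + iota1 d)
          = iota0 (tmul F a c + α • tmul F d (sigmaMap s b))
            + iota1 (tmul F (sigmaMap s a) d + tmul F c b)) := by
  constructor
  · constructor
    · intro g
      rcases z2_cases' g.2 with h | h <;>
        simp [Fbar, h, hr, hl, hse, Prod.snd_one, Prod.fst_one, vv_ne_one]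
    · intro g h
      unfold Fbar
      split_ifs
      · exact hne _ _
      · exact mul_ne_zero (hs _) (hne _ _)
      · exact hne _ _
      · exact mul_ne_zero hα (mul_ne_zero (hs _) (hne _ _))
  · intro _ a b c d
    funext z
    obtain ⟨z1, ζ⟩ := z
    rcases z2_cases' ζ with rfl | rfl
    · show ∑ p : G × Z2, _ = _
      rw [Fintype.sum_prod_type]
      simp only [z2_sum']
      simp only [Fbar, iota0, iota1, Pi.add_apply, Prod.inv_mk, Prod.mk_mul_mk,
        inv_one, one_mul, mul_one, vv_inv, vv_mul_vv, vv_ne_one,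
        if_true, if_neg vv_ne_one, ite_true, ite_false, eq_self_iff_true]
      simp only [add_zero, zero_add, Pi.smul_apply, smul_eq_mul, tmul, sigmaMap]
      rw [Finset.sum_add_distrib, Finset.mul_sum]
      congr 1
      exact Fintype.sum_equiv
        (Function.Involutive.toPerm (fun x => x⁻¹ * z1) (fun x => inv_mul_inv_mul x z1)) _ _
        (fun x => by
          dsimp only [Function.Involutive.toPerm, Equiv.coe_fn_mk]
          rw [inv_mul_inv_mul]
          ring)
    · show ∑ p : G × Z2, _ = _
      rw [Fintype.sum_prod_type]
      simp only [z2_sum']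
      simp only [Fbar, iota0, iota1, Pi.add_apply, Prod.inv_mk, Prod.mk_mul_mk,
        inv_one, one_mul, mul_one, vv_inv, vv_mul_vv, vv_ne_one,
        if_true, if_neg vv_ne_one, ite_true, ite_false, eq_self_iff_true]
      simp only [add_zero, zero_add, tmul, sigmaMap]
      rw [Finset.sum_add_distrib]
      congr 1
      · exact Finset.sum_congr rfl (fun x _ => by ring)
      · exact Fintype.sum_equiv
          (Function.Involutive.toPerm (fun x => x⁻¹ * z1) (fun x => inv_mul_inv_mul x z1)) _ _
          (fun x => by
            dsimp only [Function.Involutive.toPerm, Equiv.coe_fn_mk]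
            rw [inv_mul_inv_mul]
            ring)
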